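/- Let S be a Steiner system S(5,8,24) on a 24-element set Ω, let ∞, 0, 1 ∈ Ω be distinct points, and let K₀ ∈ S be an octad with 0 ∈ K₀ and ∞ ∉ K₀, 1 ∉ K₀. Then the number of octads K ∈ S satisfying ∞ ∈ K, 0 ∈ K, 1 ∉ K and |K ∩ K₀| = 2 is exactly 28. -/

import Mathlib

/-- A Steiner system `S(5,8,24)`: `Ω` has 24 elements, every block (octad) has 8
elements, and every 5-element subset of `Ω` is contained in exactly one octad. -/
def IsSteinerSystem_5_8_24 {Ω : Type*} [Fintype Ω] [DecidableEq Ω]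
    (S : Finset (Finset Ω)) : Prop :=
  Fintype.card Ω = 24 ∧
  (∀ K ∈ S, K.card = 8) ∧
  ∀ A : Finset Ω, A.card = 5 → ∃! K, K ∈ S ∧ A ⊆ K

namespace SteinerAux

open Finset

variable {Ω : Type*} [Fintype Ω] [DecidableEq Ω]

/-- Generic double counting. -/
lemma dc {α β : Type*} (X : Finset α) (Y : Finset β)
    (r : α → β → Prop) [∀ a b, Decidable (r a b)] :
    ∑ x ∈ X, (Y.filter (fun y => r x y)).card
      = ∑ y ∈ Y, (X.filter (fun x => r x y)).card := by
  simp only [card_filter]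
  exact Finset.sum_comm

/-- Number of octads through `j` points, `j ≤ 5`. -/
def lam : ℕ → ℕ
  | 0 => 759
  | 1 => 253
  | 2 => 77
  | 3 => 21
  | 4 => 5
  | 5 => 1
  | _ => 0

lemma N5 (S : Finset (Finset Ω)) (hS : IsSteinerSystem_5_8_24 S)
    (A : Finset Ω) (hA : A.card = 5) :
    (S.filter (fun K => A ⊆ K)).card = lam 5 := by
  obtain ⟨K, hK, huniq⟩ := hS.2.2 A hA
  rw [show lam 5 = 1 from rfl, card_eq_one]
  refine ⟨K, ?_⟩
  ext L
  simp only [mem_filter, mem_singleton]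
  exact ⟨fun h => huniq L h, fun h => h ▸ hK⟩

lemma Nstep (S : Finset (Finset Ω)) (hS : IsSteinerSystem_5_8_24 S)
    (j : ℕ) (hj : j ≤ 4)
    (ih : ∀ B : Finset Ω, B.card = j + 1 → (S.filter (fun K => B ⊆ K)).card = lam (j+1))
    (hlam : lam j * (8 - j) = (24 - j) * lam (j+1))
    (A : Finset Ω) (hA : A.card = j) :
    (S.filter (fun K => A ⊆ K)).card = lam j := by
  have key : ∑ x ∈ Aᶜ, (S.filter (fun K => insert x A ⊆ K)).card
      = ∑ K ∈ S.filter (fun K => A ⊆ K), (K \ A).card := by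
    rw [dc]
    rw [sum_filter]
    apply sum_congr rfl
    intro K _
    by_cases h : A ⊆ K
    · rw [if_pos h]
      congr 1
      ext x
      simp only [mem_filter, mem_compl, mem_sdiff, insert_subset_iff, h, and_true]
      tauto
    · rw [if_neg h]
      rw [card_eq_zero, filter_eq_empty_iff]
      intro x _ hsub
      exact h (Finset.Subset.trans (subset_insert x A) hsub)
  have hL : ∑ x ∈ Aᶜ, (S.filter (fun K => insert x A ⊆ K)).card = (24 - j) * lam (j+1) := by
    have hterm : ∀ x ∈ Aᶜ, (S.filter (fun K => insert x A ⊆ K)).card = lam (j+1) := by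
      intro x hx
      exact ih _ (by rw [card_insert_of_notMem (by simpa using hx), hA])
    rw [sum_congr rfl hterm, sum_const, smul_eq_mul, card_compl, hS.1, hA]
  have hR : ∑ K ∈ S.filter (fun K => A ⊆ K), (K \ A).card
      = (S.filter (fun K => A ⊆ K)).card * (8 - j) := by
    have hterm : ∀ K ∈ S.filter (fun K => A ⊆ K), (K \ A).card = 8 - j := by
      intro K hK
      rw [card_sdiff_of_subset (mem_filter.mp hK).2, hS.2.1 K (mem_filter.mp hK).1, hA]
    rw [sum_congr rfl hterm, sum_const, smul_eq_mul]
  have e : (S.filter (fun K => A ⊆ K)).card * (8 - j) = (24 - j) * lam (j+1) := by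
    rw [← hR, ← key, hL]
  have h8 : 0 < 8 - j := by omega
  exact Nat.eq_of_mul_eq_mul_right h8 (by rw [e, ← hlam])

lemma Nval (S : Finset (Finset Ω)) (hS : IsSteinerSystem_5_8_24 S) (j : ℕ) (hj : j ≤ 5)
    (A : Finset Ω) (hA : A.card = j) :
    (S.filter (fun K => A ⊆ K)).card = lam j := by
  have h5 := N5 S hS
  have h4 := Nstep S hS 4 (by omega) h5 (by decide)
  have h3 := Nstep S hS 3 (by omega) h4 (by decide)
  have h2 := Nstep S hS 2 (by omega) h3 (by decide)
  have h1 := Nstep S hS 1 (by omega) h2 (by decide)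
  have h0 := Nstep S hS 0 (by omega) h1 (by decide)
  interval_cases j
  · exact h0 A hA
  · exact h1 A hA
  · exact h2 A hA
  · exact h3 A hA
  · exact h4 A hA
  · exact h5 A hA

lemma inter_le4 (S : Finset (Finset Ω)) (hS : IsSteinerSystem_5_8_24 S)
    (K K₀ : Finset Ω) (hK : K ∈ S) (hK₀ : K₀ ∈ S) (hne : K ≠ K₀) :
    (K ∩ K₀).card ≤ 4 := by
  by_contra h
  push_neg at h
  obtain ⟨A, hAsub, hAcard⟩ := Finset.exists_subset_card_eq (s := K ∩ K₀) (n := 5) (by omega)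
  obtain ⟨L, _, huniq⟩ := hS.2.2 A hAcard
  have h1 := huniq K ⟨hK, hAsub.trans inter_subset_left⟩
  have h2 := huniq K₀ ⟨hK₀, hAsub.trans inter_subset_right⟩
  exact hne (h1.trans h2.symm)

/-- Double count: pairs (point of B, block of T containing it). -/
lemma sum_inter_card (T : Finset (Finset Ω)) (B : Finset Ω) :
    ∑ x ∈ B, (T.filter (fun K => x ∈ K)).card = ∑ K ∈ T, (K ∩ B).card := by
  rw [dc]
  apply sum_congr rfl
  intro K _
  congr 1
  ext x
  simp only [mem_filter, mem_inter]
  tauto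

/-- Double count: `j`-subsets of `K₀` against blocks of `T`. -/
lemma dc3 (T : Finset (Finset Ω)) (K₀ : Finset Ω) (j : ℕ) :
    ∑ A ∈ K₀.powersetCard j, (T.filter (fun K => A ⊆ K)).card
      = ∑ K ∈ T, ((K ∩ K₀).card.choose j) := by
  rw [dc]
  apply sum_congr rfl
  intro K _
  rw [← card_powersetCard]
  congr 1
  ext A
  simp only [mem_filter, mem_powersetCard, subset_inter_iff]
  tauto

/-- Any octad distinct from `K₀` meets it in an even number (not 1, not 3) of points. -/
lemma parity (S : Finset (Finset Ω)) (hS : IsSteinerSystem_5_8_24 S)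
    (K₀ : Finset Ω) (hK₀S : K₀ ∈ S) :
    ∀ K ∈ S, K ≠ K₀ → (K ∩ K₀).card ≠ 1 ∧ (K ∩ K₀).card ≠ 3 := by
  set T := S.erase K₀ with hT
  have hmaps : ∀ K ∈ T, (K ∩ K₀).card ∈ Finset.range 5 := by
    intro K hK
    rw [mem_range]
    have := inter_le4 S hS K K₀ (mem_of_mem_erase hK) hK₀S (ne_of_mem_erase hK)
    omega
  set n : ℕ → ℕ := fun i => (T.filter (fun K => (K ∩ K₀).card = i)).card with hn
  have hmom : ∀ j, 1 ≤ j → j ≤ 4 →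
      ∑ i ∈ range 5, n i * Nat.choose i j = Nat.choose 8 j * (lam j - 1) := by
    intro j hj1 hj4
    have hdc := dc3 T K₀ j
    have hL : ∑ A ∈ K₀.powersetCard j, (T.filter (fun K => A ⊆ K)).card
        = Nat.choose 8 j * (lam j - 1) := by
      have hterm : ∀ A ∈ K₀.powersetCard j, (T.filter (fun K => A ⊆ K)).card = lam j - 1 := by
        intro A hA
        rw [mem_powersetCard] at hA
        have hKmem : K₀ ∈ S.filter (fun K => A ⊆ K) := mem_filter.mpr ⟨hK₀S, hA.1⟩
        have hcsub : A.card ≤ K₀.card := card_le_card hA.1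
        rw [hT, filter_erase, card_erase_of_mem hKmem,
          Nval S hS j (by omega) A hA.2]
      rw [sum_congr rfl hterm, sum_const, smul_eq_mul, card_powersetCard,
        hS.2.1 K₀ hK₀S]
    have hR : ∑ K ∈ T, ((K ∩ K₀).card.choose j)
        = ∑ i ∈ range 5, n i * Nat.choose i j := by
      rw [← Finset.sum_fiberwise_of_maps_to hmaps (fun K => ((K ∩ K₀).card.choose j))]
      apply sum_congr rfl
      intro i _
      have hterm : ∀ K ∈ T.filter (fun K => (K ∩ K₀).card = i),
          ((K ∩ K₀).card.choose j) = Nat.choose i j := by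
        intro K hK
        rw [(mem_filter.mp hK).2]
      rw [sum_congr rfl hterm, sum_const, smul_eq_mul]
    rw [← hL, hdc, hR]
  have e1 := hmom 1 (by omega) (by omega)
  have e2 := hmom 2 (by omega) (by omega)
  have e3 := hmom 3 (by omega) (by omega)
  have e4 := hmom 4 (by omega) (by omega)
  simp only [Finset.sum_range_succ, Finset.sum_range_zero] at e1 e2 e3 e4
  norm_num [lam, Nat.choose] at e1 e2 e3 e4
  intro K hK hne
  have hmemT : K ∈ T := mem_erase.mpr ⟨hne, hK⟩
  constructor
  · intro hcard
    have hpos : 0 < n 1 :=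
      card_pos.mpr ⟨K, mem_filter.mpr ⟨hmemT, hcard⟩⟩
    omega
  · intro hcard
    have hpos : 0 < n 3 :=
      card_pos.mpr ⟨K, mem_filter.mpr ⟨hmemT, hcard⟩⟩
    omega

/-- The two counting equations for octads through a fixed set `P` meeting `K₀` only in `p0`. -/
lemma countP (S : Finset (Finset Ω)) (hS : IsSteinerSystem_5_8_24 S)
    (K₀ : Finset Ω) (hK₀S : K₀ ∈ S)
    (hparity : ∀ K ∈ S, K ≠ K₀ → (K ∩ K₀).card ≠ 1 ∧ (K ∩ K₀).card ≠ 3)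
    (P : Finset Ω) (p0 : Ω) (j : ℕ) (hj : j ≤ 4) (hPcard : P.card = j)
    (hPK : P ∩ K₀ = {p0}) (hnsub : ¬ P ⊆ K₀) :
    (S.filter (fun K => P ⊆ K ∧ (K ∩ K₀).card = 2)).card
      + (S.filter (fun K => P ⊆ K ∧ (K ∩ K₀).card = 4)).card = lam j ∧
    (S.filter (fun K => P ⊆ K ∧ (K ∩ K₀).card = 2)).card
      + 3 * (S.filter (fun K => P ⊆ K ∧ (K ∩ K₀).card = 4)).card = 7 * lam (j+1) := by
  have hp0PK : p0 ∈ P ∩ K₀ := hPK ▸ mem_singleton_self p0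
  have hp0P : p0 ∈ P := (mem_inter.mp hp0PK).1
  have hp0K : p0 ∈ K₀ := (mem_inter.mp hp0PK).2
  set T := S.filter (fun K => P ⊆ K) with hTdef
  have hfib : ∀ K ∈ T, (K ∩ K₀).card = 2 ∨ (K ∩ K₀).card = 4 := by
    intro K hK
    obtain ⟨hKS, hPKsub⟩ := mem_filter.mp hK
    have hne : K ≠ K₀ := fun h => hnsub (h ▸ hPKsub)
    have hle := inter_le4 S hS K K₀ hKS hK₀S hne
    have hge : 0 < (K ∩ K₀).card :=
      card_pos.mpr ⟨p0, mem_inter.mpr ⟨hPKsub hp0P, hp0K⟩⟩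
    have := hparity K hKS hne
    omega
  have hsplit2 : S.filter (fun K => P ⊆ K ∧ (K ∩ K₀).card = 2)
      = T.filter (fun K => (K ∩ K₀).card = 2) := by rw [hTdef, filter_filter]
  have hsplit4 : S.filter (fun K => P ⊆ K ∧ (K ∩ K₀).card = 4)
      = T.filter (fun K => (K ∩ K₀).card = 4) := by rw [hTdef, filter_filter]
  have hneg : T.filter (fun K => ¬ (K ∩ K₀).card = 2)
      = T.filter (fun K => (K ∩ K₀).card = 4) := by
    apply filter_congr
    intro K hK
    rcases hfib K hK with h | h <;> simp [h]
  have hTcard : T.card = lam j := Nval S hS j (by omega) P hPcard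
  have eq1 : (T.filter (fun K => (K ∩ K₀).card = 2)).card
      + (T.filter (fun K => (K ∩ K₀).card = 4)).card = lam j := by
    rw [← hneg, card_filter_add_card_filter_not, hTcard]
  have hdc := sum_inter_card T (K₀.erase p0)
  have hL : ∑ x ∈ K₀.erase p0, (T.filter (fun K => x ∈ K)).card = 7 * lam (j+1) := by
    have hterm : ∀ x ∈ K₀.erase p0, (T.filter (fun K => x ∈ K)).card = lam (j+1) := by
      intro x hx
      obtain ⟨hxne, hxK⟩ := mem_erase.mp hx
      have hxP : x ∉ P := by
        intro hxP
        exact hxne (by simpa [hPK] using mem_inter.mpr ⟨hxP, hxK⟩)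
      rw [hTdef, filter_filter]
      have hpred : S.filter (fun K => P ⊆ K ∧ x ∈ K)
          = S.filter (fun K => insert x P ⊆ K) := by
        apply filter_congr
        intro K _
        simp [insert_subset_iff, and_comm]
      rw [hpred, Nval S hS (j+1) (by omega) _
        (by rw [card_insert_of_notMem hxP, hPcard])]
    rw [sum_congr rfl hterm, sum_const, smul_eq_mul, card_erase_of_mem hp0K,
      hS.2.1 K₀ hK₀S]
  have hR : ∑ K ∈ T, (K ∩ K₀.erase p0).card
      = (T.filter (fun K => (K ∩ K₀).card = 2)).card
        + 3 * (T.filter (fun K => (K ∩ K₀).card = 4)).card := by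
    have hterm : ∀ K ∈ T, (K ∩ K₀.erase p0).card = (K ∩ K₀).card - 1 := by
      intro K hK
      have hp0mem : p0 ∈ K ∩ K₀ := mem_inter.mpr ⟨(mem_filter.mp hK).2 hp0P, hp0K⟩
      have : K ∩ K₀.erase p0 = (K ∩ K₀).erase p0 := by
        ext y
        simp only [mem_inter, mem_erase]
        tauto
      rw [this, card_erase_of_mem hp0mem]
    rw [sum_congr rfl hterm,
      ← sum_filter_add_sum_filter_not T (fun K => (K ∩ K₀).card = 2)]
    have h2 : ∑ K ∈ T.filter (fun K => (K ∩ K₀).card = 2), ((K ∩ K₀).card - 1)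
        = (T.filter (fun K => (K ∩ K₀).card = 2)).card := by
      have : ∀ K ∈ T.filter (fun K => (K ∩ K₀).card = 2), (K ∩ K₀).card - 1 = 1 := by
        intro K hK
        rw [(mem_filter.mp hK).2]
      rw [sum_congr rfl this, sum_const, smul_eq_mul, mul_one]
    have h4 : ∑ K ∈ T.filter (fun K => ¬ (K ∩ K₀).card = 2), ((K ∩ K₀).card - 1)
        = 3 * (T.filter (fun K => (K ∩ K₀).card = 4)).card := by
      rw [hneg]
      have : ∀ K ∈ T.filter (fun K => (K ∩ K₀).card = 4), (K ∩ K₀).card - 1 = 3 := by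
        intro K hK
        rw [(mem_filter.mp hK).2]
      rw [sum_congr rfl this, sum_const, smul_eq_mul, mul_comm]
    rw [h2, h4]
  refine ⟨by rw [hsplit2, hsplit4]; exact eq1, ?_⟩
  rw [hsplit2, hsplit4, ← hL, hdc, hR]

end SteinerAux

open Finset SteinerAux in
theorem count_octads_E7_p {Ω : Type*} [Fintype Ω] [DecidableEq Ω]
    (S : Finset (Finset Ω)) (hS : IsSteinerSystem_5_8_24 S)
    (pinf p0 p1 : Ω) (h01 : p0 ≠ p1) (hinf0 : pinf ≠ p0) (hinf1 : pinf ≠ p1)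
    (K₀ : Finset Ω) (hK₀S : K₀ ∈ S)
    (h0K : p0 ∈ K₀) (hinfK : pinf ∉ K₀) (h1K : p1 ∉ K₀) :
    (S.filter fun K => pinf ∈ K ∧ p0 ∈ K ∧ p1 ∉ K ∧ (K ∩ K₀).card = 2).card = 28 := by
  have hpar := parity S hS K₀ hK₀S
  -- P = {pinf, p0}
  have hPa : ({pinf, p0} : Finset Ω) ∩ K₀ = {p0} := by
    ext x
    simp only [mem_inter, mem_insert, mem_singleton]
    constructor
    · rintro ⟨h1 | h1, h2⟩
      · exact absurd (h1 ▸ h2) hinfK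
      · exact h1
    · rintro rfl
      exact ⟨Or.inr rfl, h0K⟩
  have hPacard : ({pinf, p0} : Finset Ω).card = 2 := by
    rw [card_insert_of_notMem (by simp [hinf0]), card_singleton]
  have hPansub : ¬ ({pinf, p0} : Finset Ω) ⊆ K₀ :=
    fun h => hinfK (h (mem_insert_self _ _))
  obtain ⟨ea1, ea2⟩ := countP S hS K₀ hK₀S hpar {pinf, p0} p0 2 (by omega) hPacard hPa hPansub
  -- P = {pinf, p0, p1}
  have hPb : ({pinf, p0, p1} : Finset Ω) ∩ K₀ = {p0} := by
    ext x
    simp only [mem_inter, mem_insert, mem_singleton]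
    constructor
    · rintro ⟨h1 | h1 | h1, h2⟩
      · exact absurd (h1 ▸ h2) hinfK
      · exact h1
      · exact absurd (h1 ▸ h2) h1K
    · rintro rfl
      exact ⟨Or.inr (Or.inl rfl), h0K⟩
  have hPbcard : ({pinf, p0, p1} : Finset Ω).card = 3 := by
    rw [card_insert_of_notMem (by simp [hinf0, hinf1]),
      card_insert_of_notMem (by simp [h01]), card_singleton]
  have hPbnsub : ¬ ({pinf, p0, p1} : Finset Ω) ⊆ K₀ :=
    fun h => hinfK (h (mem_insert_self _ _))
  obtain ⟨eb1, eb2⟩ := countP S hS K₀ hK₀S hpar {pinf, p0, p1} p0 3 (by omega) hPbcard hPb hPbnsub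
  norm_num [lam] at ea1 ea2 eb1 eb2
  -- split the a2-set by whether p1 ∈ K
  have hsplit := card_filter_add_card_filter_not
    (s := S.filter (fun K => ({pinf, p0} : Finset Ω) ⊆ K ∧ (K ∩ K₀).card = 2))
    (p := fun K => p1 ∈ K)
  have hid1 : (S.filter (fun K => ({pinf, p0} : Finset Ω) ⊆ K ∧ (K ∩ K₀).card = 2)).filter
      (fun K => p1 ∈ K)
      = S.filter (fun K => ({pinf, p0, p1} : Finset Ω) ⊆ K ∧ (K ∩ K₀).card = 2) := by
    rw [filter_filter]
    apply filter_congr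
    intro K _
    simp only [insert_subset_iff, singleton_subset_iff]
    tauto
  have hid2 : (S.filter (fun K => ({pinf, p0} : Finset Ω) ⊆ K ∧ (K ∩ K₀).card = 2)).filter
      (fun K => ¬ p1 ∈ K)
      = S.filter (fun K => pinf ∈ K ∧ p0 ∈ K ∧ p1 ∉ K ∧ (K ∩ K₀).card = 2) := by
    rw [filter_filter]
    apply filter_congr
    intro K _
    simp only [insert_subset_iff, singleton_subset_iff]
    tauto
  rw [hid1, hid2] at hsplit
  omega
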